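/- arXiv:1807.09497 — 2 statements merged into one kernel-verified Lean document; each statement's English description precedes it below -/
import Mathlib

section
/- For every p ≥ 2 and all real numbers a and b with b ≥ 0, one has (a+b)^{p-1} - sign(a)|a|^{p-1} ≥ 2^{2-p} b^{p-1}, where t^{p-1} denotes |t|^{p-2} t for real t. -/
open scoped NNReal

lemma superadd_rpow (x y q : ℝ) (hx : 0 ≤ x) (hy : 0 ≤ y) (hq : 1 ≤ q) :
    x ^ q + y ^ q ≤ (x + y) ^ q := by
  lift x to ℝ≥0 using hx
  lift y to ℝ≥0 using hy
  have := NNReal.add_rpow_le_rpow_add x y hq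
  exact_mod_cast this

lemma rpow_add_le_two (x y q : ℝ) (hx : 0 ≤ x) (hy : 0 ≤ y) (hq : 1 ≤ q) :
    (x + y) ^ q ≤ 2 ^ (q - 1) * (x ^ q + y ^ q) := by
  lift x to ℝ≥0 using hx
  lift y to ℝ≥0 using hy
  have := NNReal.rpow_add_le_mul_rpow_add_rpow x y hq
  exact_mod_cast this

lemma rpow_mul_self (x q : ℝ) (hx : 0 ≤ x) (hq : q ≠ 0) : x ^ (q - 1) * x = x ^ q := by
  rcases eq_or_lt_of_le hx with h | h
  · simp [← h, Real.zero_rpow hq]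
  · have h1 : x ^ (q - 1) * x ^ (1:ℝ) = x ^ (q - 1 + 1) := (Real.rpow_add h _ _).symm
    rw [Real.rpow_one] at h1
    rw [h1]
    norm_num

/-- For `p ≥ 2`, `a ∈ ℝ`, `b ≥ 0`, one has
`(a+b)^{p-1} - a^{p-1} ≥ 2^{2-p} b^{p-1}`, where `t^{p-1} := |t|^{p-2} t`. -/
theorem odd_power_lower_bound (p a b : ℝ) (hp : 2 ≤ p) (hb : 0 ≤ b) :
    |a + b| ^ (p - 2) * (a + b) - |a| ^ (p - 2) * a ≥ (2 : ℝ) ^ (2 - p) * b ^ (p - 1) := by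
  have hq : 1 ≤ p - 1 := by linarith
  have hq0 : p - 1 ≠ 0 := by positivity
  have key : ∀ x : ℝ, 0 ≤ x → x ^ (p - 2) * x = x ^ (p - 1) := by
    intro x hx
    have := rpow_mul_self x (p - 1) hx hq0
    rw [show p - 1 - 1 = p - 2 by ring] at this
    exact this
  have hbq : (0:ℝ) ≤ b ^ (p - 1) := Real.rpow_nonneg hb _
  have h2 : (2:ℝ) ^ (2 - p) ≤ 1 :=
    Real.rpow_le_one_of_one_le_of_nonpos one_le_two (by linarith)
  rcases le_or_gt 0 a with ha | ha
  · have hab : 0 ≤ a + b := by linarith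
    rw [abs_of_nonneg ha, abs_of_nonneg hab, key _ hab, key _ ha]
    have h := superadd_rpow a b (p - 1) ha hb hq
    nlinarith [mul_le_mul_of_nonneg_right h2 hbq]
  · rcases le_or_gt (a + b) 0 with hab | hab
    · rw [abs_of_nonpos ha.le, abs_of_nonpos hab]
      have e1 : (-(a+b)) ^ (p - 2) * (a+b) = -((-(a+b)) ^ (p-1)) := by
        have := key (-(a+b)) (by linarith); nlinarith [this]
      have e2 : (-a) ^ (p - 2) * a = -((-a) ^ (p-1)) := by
        have := key (-a) (by linarith); nlinarith [this]
      rw [e1, e2]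
      have h := superadd_rpow (-(a+b)) b (p - 1) (by linarith) hb hq
      rw [show -(a+b) + b = -a by ring] at h
      nlinarith [mul_le_mul_of_nonneg_right h2 hbq]
    · rw [abs_of_nonpos ha.le, abs_of_pos hab, key _ hab.le]
      have e2 : (-a) ^ (p - 2) * a = -((-a) ^ (p-1)) := by
        have := key (-a) (by linarith); nlinarith [this]
      rw [e2]
      have h := rpow_add_le_two (a + b) (-a) (p - 1) hab.le (by linarith) hq
      rw [show a + b + -a = b by ring] at h
      -- from b^(p-1) ≤ 2^(p-2) * ((a+b)^(p-1) + (-a)^(p-1))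
      have h2p : (0:ℝ) < (2:ℝ) ^ (2 - p) := Real.rpow_pos_of_pos two_pos _
      have hmul : (2:ℝ) ^ (2 - p) * (2:ℝ) ^ (p - 1 - 1) = 1 := by
        rw [← Real.rpow_add two_pos, show 2 - p + (p - 1 - 1) = 0 by ring, Real.rpow_zero]
      have := mul_le_mul_of_nonneg_left h h2p.le
      rw [← mul_assoc, hmul, one_mul] at this
      linarith
end

section
/- For every p ≥ 2 there exists a constant C_p > 0 such that for all real numbers a, b, c one has (a-b)^{p-1} - (c-b)^{p-1} ≤ C_p (|a|^{p-2} + |b|^{p-2}) |a-c| + C_p |a-c|^{p-1}, where t^{p-1} := |t|^{p-2} t denotes the odd power. -/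
open Filter Set

private lemma oddPow_hasDerivAt (p : ℝ) (hp : 2 ≤ p) (t : ℝ) :
    HasDerivAt (fun s : ℝ => |s| ^ (p - 2) * s) ((p - 1) * |t| ^ (p - 2)) t := by
  rcases lt_trichotomy t 0 with ht | rfl | ht
  · have hne : (-t) ≠ 0 := by intro h; nlinarith [neg_eq_zero.mp h]
    have h1 : HasDerivAt (fun s : ℝ => (-s) ^ (p - 2))
        ((p - 2) * (-t) ^ (p - 2 - 1) * (-1)) t := by
      have hrp := Real.hasDerivAt_rpow_const (x := -t) (p := p - 2) (Or.inl hne)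
      exact hrp.comp t (hasDerivAt_neg t)
    have h2 : HasDerivAt (fun s : ℝ => (-s) ^ (p - 2) * s)
        ((p - 2) * (-t) ^ (p - 2 - 1) * (-1) * t + (-t) ^ (p - 2) * 1) t :=
      h1.mul (hasDerivAt_id t)
    have heq : (fun s : ℝ => |s| ^ (p - 2) * s) =ᶠ[nhds t] (fun s : ℝ => (-s) ^ (p - 2) * s) := by
      filter_upwards [Iio_mem_nhds ht] with s hs
      rw [abs_of_neg hs]
    have h3 := h2.congr_of_eventuallyEq heq
    refine h3.congr_deriv (Eq.symm ?_)
    rw [abs_of_neg ht]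
    have e : (-t) ^ (p - 2) = (-t) ^ (p - 2 - 1) * (-t) := by
      have e2 := Real.rpow_add_one hne (p - 2 - 1)
      have e3 : p - 2 - 1 + 1 = p - 2 := by ring
      rw [e3] at e2
      exact e2
    linear_combination (p - 2) * e
  · rcases eq_or_lt_of_le hp with hp2 | hp2
    · have hfun : (fun s : ℝ => |s| ^ (p - 2) * s) = fun s : ℝ => s := by
        funext s
        rw [← hp2]
        norm_num
      rw [hfun]
      have : (p - 1) * |(0 : ℝ)| ^ (p - 2) = 1 := by
        rw [← hp2]; norm_num
      rw [this]
      exact hasDerivAt_id 0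
    · rw [hasDerivAt_iff_tendsto_slope]
      have hval : (p - 1) * |(0 : ℝ)| ^ (p - 2) = 0 := by
        rw [abs_zero, Real.zero_rpow (by linarith : p - 2 ≠ 0)]; ring
      rw [hval]
      have hcont : Tendsto (fun s : ℝ => |s| ^ (p - 2)) (nhds 0) (nhds 0) := by
        have h1 : ContinuousAt (fun x : ℝ => x ^ (p - 2)) (|(0 : ℝ)|) := by
          simpa using Real.continuousAt_rpow_const 0 (p - 2) (Or.inr (by linarith))
        have h2 := h1.comp continuous_abs.continuousAt
        simpa [ContinuousAt, Function.comp_def,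
          Real.zero_rpow (by linarith : p - 2 ≠ 0)] using h2
      refine Tendsto.congr' ?_ (hcont.mono_left nhdsWithin_le_nhds)
      filter_upwards [self_mem_nhdsWithin] with s hs
      have hs' : s ≠ 0 := hs
      rw [slope_def_field]
      field_simp
      simp
  · have hne : t ≠ 0 := ne_of_gt ht
    have h1 : HasDerivAt (fun s : ℝ => s ^ (p - 2)) ((p - 2) * t ^ (p - 2 - 1)) t :=
      Real.hasDerivAt_rpow_const (Or.inl hne)
    have h2 : HasDerivAt (fun s : ℝ => s ^ (p - 2) * s)
        ((p - 2) * t ^ (p - 2 - 1) * t + t ^ (p - 2) * 1) t :=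
      h1.mul (hasDerivAt_id t)
    have heq : (fun s : ℝ => |s| ^ (p - 2) * s) =ᶠ[nhds t] (fun s : ℝ => s ^ (p - 2) * s) := by
      filter_upwards [Ioi_mem_nhds ht] with s hs
      rw [abs_of_pos hs]
    have h3 := h2.congr_of_eventuallyEq heq
    refine h3.congr_deriv (Eq.symm ?_)
    rw [abs_of_pos ht]
    have e : t ^ (p - 2) = t ^ (p - 2 - 1) * t := by
      have e2 := Real.rpow_add_one hne (p - 2 - 1)
      have e3 : p - 2 - 1 + 1 = p - 2 := by ring
      rw [e3] at e2
      exact e2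
    linear_combination (p - 2) * e

private lemma oddPow_diff_le (p : ℝ) (hp : 2 ≤ p) {x y : ℝ} (hxy : y ≤ x) :
    |(|x| ^ (p - 2) * x) - (|y| ^ (p - 2) * y)| ≤
      (p - 1) * (max |x| |y|) ^ (p - 2) * |x - y| := by
  rcases eq_or_lt_of_le hxy with rfl | hlt
  · simp
  · obtain ⟨ξ, hξ, heq⟩ := exists_hasDerivAt_eq_slope (fun s : ℝ => |s| ^ (p - 2) * s)
      (fun s : ℝ => (p - 1) * |s| ^ (p - 2)) hlt
      (fun s _ => (oddPow_hasDerivAt p hp s).continuousAt.continuousWithinAt)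
      (fun s _ => oddPow_hasDerivAt p hp s)
    have hxy0 : (0:ℝ) < x - y := by linarith
    have hdiff : (|x| ^ (p - 2) * x) - (|y| ^ (p - 2) * y) =
        (p - 1) * |ξ| ^ (p - 2) * (x - y) := by
      field_simp at heq
      linarith [heq]
    have hξabs : |ξ| ≤ max |x| |y| := by
      rw [abs_le]
      constructor
      · calc -(max |x| |y|) ≤ -|y| := by simp [le_max_right]
          _ ≤ y := neg_abs_le y
          _ ≤ ξ := le_of_lt hξ.1
      · calc ξ ≤ x := le_of_lt hξ.2
          _ ≤ |x| := le_abs_self x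
          _ ≤ max |x| |y| := le_max_left _ _
    have hpow : |ξ| ^ (p - 2) ≤ (max |x| |y|) ^ (p - 2) :=
      Real.rpow_le_rpow (abs_nonneg ξ) hξabs (by linarith)
    have hp1 : (0:ℝ) ≤ p - 1 := by linarith
    have hnn : 0 ≤ (p - 1) * |ξ| ^ (p - 2) * (x - y) :=
      mul_nonneg (mul_nonneg hp1 (Real.rpow_nonneg (abs_nonneg ξ) _)) hxy0.le
    rw [hdiff, abs_of_nonneg hnn, abs_of_pos hxy0]
    exact mul_le_mul_of_nonneg_right (mul_le_mul_of_nonneg_left hpow hp1) hxy0.le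

private lemma oddPow_abs_diff_le (p : ℝ) (hp : 2 ≤ p) (x y : ℝ) :
    |(|x| ^ (p - 2) * x) - (|y| ^ (p - 2) * y)| ≤
      (p - 1) * (max |x| |y|) ^ (p - 2) * |x - y| := by
  rcases le_total y x with h | h
  · exact oddPow_diff_le p hp h
  · have h2 := oddPow_diff_le p hp h
    calc |(|x| ^ (p - 2) * x) - (|y| ^ (p - 2) * y)|
        = |(|y| ^ (p - 2) * y) - (|x| ^ (p - 2) * x)| := abs_sub_comm _ _
      _ ≤ (p - 1) * (max |y| |x|) ^ (p - 2) * |y - x| := h2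
      _ = (p - 1) * (max |x| |y|) ^ (p - 2) * |x - y| := by
          rw [max_comm, abs_sub_comm]

private lemma three_rpow (q : ℝ) (hq : 0 ≤ q) {u v w : ℝ} (hu : 0 ≤ u) (hv : 0 ≤ v)
    (hw : 0 ≤ w) : (u + v + w) ^ q ≤ 3 ^ q * (u ^ q + v ^ q + w ^ q) := by
  set m := max u (max v w) with hm
  have hmu : u ≤ m := le_max_left _ _
  have hmv : v ≤ m := le_trans (le_max_left _ _) (le_max_right _ _)
  have hmw : w ≤ m := le_trans (le_max_right _ _) (le_max_right _ _)
  have hm0 : 0 ≤ m := le_trans hu hmu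
  have h1 : (u + v + w) ^ q ≤ (3 * m) ^ q :=
    Real.rpow_le_rpow (by linarith) (by linarith) hq
  have h2 : (3 * m) ^ q = 3 ^ q * m ^ q := Real.mul_rpow (by norm_num) hm0
  have h3 : m ^ q ≤ u ^ q + v ^ q + w ^ q := by
    have pu : (0:ℝ) ≤ u ^ q := Real.rpow_nonneg hu q
    have pv : (0:ℝ) ≤ v ^ q := Real.rpow_nonneg hv q
    have pw : (0:ℝ) ≤ w ^ q := Real.rpow_nonneg hw q
    rcases max_choice u (max v w) with h | h
    · rw [hm, h]; linarith
    · rcases max_choice v w with h' | h' <;> rw [hm, h, h'] <;> linarith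
  calc (u + v + w) ^ q ≤ 3 ^ q * m ^ q := by rw [← h2]; exact h1
    _ ≤ 3 ^ q * (u ^ q + v ^ q + w ^ q) := by
        have : (0:ℝ) ≤ (3:ℝ) ^ q := Real.rpow_nonneg (by norm_num) q
        nlinarith

/-- For every `p ≥ 2` there is `C_p > 0` such that for all reals `a b c`,
`(a-b)^{p-1} - (c-b)^{p-1} ≤ C_p (|a|^{p-2}+|b|^{p-2})|a-c| + C_p |a-c|^{p-1}`,
where `t^{p-1} := |t|^{p-2} t`. -/
theorem odd_power_difference_bound (p : ℝ) (hp : 2 ≤ p) :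
    ∃ C : ℝ, 0 < C ∧ ∀ a b c : ℝ,
      |a - b| ^ (p - 2) * (a - b) - |c - b| ^ (p - 2) * (c - b) ≤
        C * (|a| ^ (p - 2) + |b| ^ (p - 2)) * |a - c| + C * |a - c| ^ (p - 1) := by
  have hp1' : (0:ℝ) < p - 1 := by linarith
  refine ⟨(p - 1) * 3 ^ (p - 2), by positivity, fun a b c => ?_⟩
  rcases eq_or_ne a c with rfl | hac
  · simp [Real.zero_rpow (by linarith : p - 1 ≠ 0)]
  -- key bound via MVT
  have key := oddPow_abs_diff_le p hp (a - b) (c - b)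
  have hsub : (a - b) - (c - b) = a - c := by ring
  rw [hsub] at key
  set D := |a - c| with hD
  have hD0 : 0 ≤ D := abs_nonneg _
  set M := max |a - b| |c - b| with hM
  have hMle : M ≤ |a| + |b| + D := by
    apply max_le
    · calc |a - b| ≤ |a| + |b| := by simpa [sub_eq_add_neg] using abs_add_le a (-b)
        _ ≤ |a| + |b| + D := by linarith
    · calc |c - b| = |(a - b) - (a - c)| := by ring_nf
        _ ≤ |a - b| + |a - c| := abs_sub _ _
        _ ≤ (|a| + |b|) + D := by
            have : |a - b| ≤ |a| + |b| := by simpa [sub_eq_add_neg] using abs_add_le a (-b)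
            linarith
        _ = |a| + |b| + D := by ring
  have hM0 : 0 ≤ M := le_trans (abs_nonneg _) (le_max_left _ _)
  have h1 : M ^ (p - 2) ≤ (|a| + |b| + D) ^ (p - 2) :=
    Real.rpow_le_rpow hM0 hMle (by linarith)
  have h2 : (|a| + |b| + D) ^ (p - 2) ≤
      3 ^ (p - 2) * (|a| ^ (p - 2) + |b| ^ (p - 2) + D ^ (p - 2)) :=
    three_rpow (p - 2) (by linarith) (abs_nonneg a) (abs_nonneg b) hD0
  have hMpow : M ^ (p - 2) ≤ 3 ^ (p - 2) * (|a| ^ (p - 2) + |b| ^ (p - 2) + D ^ (p - 2)) :=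
    le_trans h1 h2
  have hDp : D ^ (p - 1) = D ^ (p - 2) * D := by
    have hDne : D ≠ 0 := abs_ne_zero.mpr (sub_ne_zero.mpr hac)
    have : p - 1 = (p - 2) + 1 := by ring
    rw [this, Real.rpow_add_one hDne]
  have hLHS : |a - b| ^ (p - 2) * (a - b) - |c - b| ^ (p - 2) * (c - b) ≤
      (p - 1) * M ^ (p - 2) * D := le_trans (le_abs_self _) key
  have hp1 : (0:ℝ) ≤ p - 1 := by linarith
  calc |a - b| ^ (p - 2) * (a - b) - |c - b| ^ (p - 2) * (c - b)
      ≤ (p - 1) * M ^ (p - 2) * D := hLHS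
    _ ≤ (p - 1) * (3 ^ (p - 2) * (|a| ^ (p - 2) + |b| ^ (p - 2) + D ^ (p - 2))) * D :=
        mul_le_mul_of_nonneg_right (mul_le_mul_of_nonneg_left hMpow hp1) hD0
    _ = (p - 1) * 3 ^ (p - 2) * (|a| ^ (p - 2) + |b| ^ (p - 2)) * D +
        (p - 1) * 3 ^ (p - 2) * (D ^ (p - 2) * D) := by ring
    _ = (p - 1) * 3 ^ (p - 2) * (|a| ^ (p - 2) + |b| ^ (p - 2)) * D +
        (p - 1) * 3 ^ (p - 2) * D ^ (p - 1) := by rw [hDp]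
end
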